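/- Let d be a positive integer, ζ a primitive d-th root of unity in ℂ, and μ : ℤ/dℤ → ℚ a function with ∑_{i=0}^{d−1} ζ^i μ(i) = 0. Then μ lies in the sum of the subspaces V_p over primes p dividing d, where V_p is the space of ℚ-valued functions on ℤ/dℤ periodic with period d/p. -/

import Mathlib

open Polynomial

/-- The subspace of `ℚ`-valued functions on `ℤ/dℤ` that are periodic with period `d/q`,
i.e. invariant under translation by `d/q`. -/
def periodicSub (d q : ℕ) : Submodule ℚ (ZMod d → ℚ) where
  carrier := {f | ∀ a : ZMod d, f (a + ((d / q : ℕ) : ZMod d)) = f a}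
  add_mem' := by
    intro f g hf hg a
    simp [hf a, hg a]
  zero_mem' := by intro a; rfl
  smul_mem' := by
    intro c f hf a
    simp [hf a]

noncomputable section

/-- The natural ring homomorphism from `ℚ[X]` to the group algebra of `ZMod d`. -/
def psiHom (d : ℕ) : ℚ[X] →+* AddMonoidAlgebra ℚ (ZMod d) :=
  (AddMonoidAlgebra.mapDomainRingHom ℚ (Nat.castRingHom (ZMod d)).toAddMonoidHom).comp
    (Polynomial.toFinsuppIso ℚ).toRingHom

lemma psiHom_monomial (d n : ℕ) (a : ℚ) :
    psiHom d (monomial n a) = AddMonoidAlgebra.single ((n : ZMod d)) a := by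
  simp only [psiHom, RingHom.comp_apply, RingEquiv.toRingHom_eq_coe, RingHom.coe_coe,
    Polynomial.toFinsuppIso_apply, Polynomial.toFinsupp_monomial,
    AddMonoidAlgebra.mapDomainRingHom_apply]
  exact AddMonoidAlgebra.mapDomain_single

lemma psiHom_X_pow (d n : ℕ) :
    psiHom d (X ^ n) = AddMonoidAlgebra.single ((n : ZMod d)) (1 : ℚ) := by
  rw [Polynomial.X_pow_eq_monomial, psiHom_monomial]

/-- The "norm" polynomial `∑_{k<p} X^{(d/p)k}`. -/
def Npoly (d p : ℕ) : ℚ[X] := ∑ k ∈ Finset.range p, X ^ (d / p * k)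

lemma Npoly_mul (d p : ℕ) (hpd : p ∣ d) :
    Npoly d p * (X ^ (d / p) - 1) = X ^ d - 1 := by
  have h : ∀ k, (X : ℚ[X]) ^ (d / p * k) = (X ^ (d / p)) ^ k := fun k => by
    rw [pow_mul]
  unfold Npoly
  simp_rw [h]
  rw [geom_sum_mul, ← pow_mul, Nat.div_mul_cancel hpd]

lemma psiHom_X_pow_d_sub_one (d : ℕ) : psiHom d ((X : ℚ[X]) ^ d - 1) = 0 := by
  rw [map_sub, map_one, psiHom_X_pow, ZMod.natCast_self, ← AddMonoidAlgebra.one_def, sub_self]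

lemma psi_periodic (d p : ℕ) (hpd : p ∣ d) (g : ℚ[X]) (a : ZMod d) :
    (psiHom d (Npoly d p * g)).coeff (a + ((d / p : ℕ) : ZMod d))
      = (psiHom d (Npoly d p * g)).coeff a := by
  set t : ZMod d := ((d / p : ℕ) : ZMod d) with ht
  set F := psiHom d (Npoly d p * g) with hF
  have key : AddMonoidAlgebra.single t (1 : ℚ) * F = F := by
    rw [ht, ← psiHom_X_pow d (d / p), hF, ← map_mul]
    have hpoly : (X : ℚ[X]) ^ (d / p) * (Npoly d p * g)
        = Npoly d p * g + (X ^ d - 1) * g := by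
      rw [← Npoly_mul d p hpd]; ring
    rw [hpoly, map_add]
    simp only [map_mul, psiHom_X_pow_d_sub_one, zero_mul, add_zero]
  have h2 := AddMonoidAlgebra.coeff_single_mul_apply F (1 : ℚ) t (a + t)
  rw [key] at h2
  rw [h2, one_mul]
  congr 1
  ring

lemma cyclotomic_mem_span (d : ℕ) (hd2 : 2 ≤ d) :
    cyclotomic d ℚ ∈ Ideal.span ↑(d.primeFactors.image (Npoly d)) := by
  have hd0 : 0 < d := by omega
  obtain ⟨ζ, hζ⟩ : ∃ ζ : ℂ, IsPrimitiveRoot ζ d :=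
    ⟨_, Complex.isPrimitiveRoot_exp d (by omega)⟩
  have hΦ : cyclotomic d ℚ = minpoly ℚ ζ := cyclotomic_eq_minpoly_rat hζ hd0
  have hXd : (X : ℚ[X]) ^ d - 1 ≠ 0 := by
    have := Polynomial.X_pow_sub_C_ne_zero hd0 (1 : ℚ)
    simpa using this
  have hdninproper : d ∉ d.properDivisors := by
    simp [Nat.mem_properDivisors]
  have hprodX : (X : ℚ[X]) ^ d - 1
      = cyclotomic d ℚ * ∏ e ∈ d.properDivisors, cyclotomic e ℚ := by
    rw [← prod_cyclotomic_eq_X_pow_sub_one hd0 ℚ, ← Nat.insert_self_properDivisors hd0.ne',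
      Finset.prod_insert hdninproper]
  have hNdvd : ∀ p : ℕ, ∃ m : ℚ[X], p ∈ d.primeFactors → Npoly d p = cyclotomic d ℚ * m := by
    intro p
    by_cases hp : p ∈ d.primeFactors
    · have hp' : p.Prime := Nat.prime_of_mem_primeFactors hp
      have hpd : p ∣ d := Nat.dvd_of_mem_primeFactors hp
      have haev : aeval ζ (Npoly d p) = 0 := by
        have hη : IsPrimitiveRoot (ζ ^ (d / p)) p := hζ.pow hd0 (Nat.div_mul_cancel hpd).symm
        have hne : ζ ^ (d / p) - 1 ≠ 0 := sub_ne_zero.mpr (hη.ne_one hp'.one_lt)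
        have hgs : (∑ k ∈ Finset.range p, (ζ ^ (d / p)) ^ k) * (ζ ^ (d / p) - 1) = 0 := by
          rw [geom_sum_mul, ← pow_mul, Nat.div_mul_cancel hpd, hζ.pow_eq_one, sub_self]
        have hsum : (∑ k ∈ Finset.range p, (ζ ^ (d / p)) ^ k) = 0 := by
          rcases mul_eq_zero.mp hgs with h | h
          · exact h
          · exact absurd h hne
        unfold Npoly
        rw [map_sum]
        simpa [pow_mul] using hsum
      obtain ⟨m, hm⟩ : cyclotomic d ℚ ∣ Npoly d p := hΦ ▸ minpoly.dvd ℚ ζ haev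
      exact ⟨m, fun _ => hm⟩
    · exact ⟨0, fun h => absurd h hp⟩
  choose Mf hMf using hNdvd
  have hΦne : cyclotomic d ℚ ≠ 0 := cyclotomic_ne_zero d ℚ
  have hMprod : ∀ p ∈ d.primeFactors,
      Mf p * (X ^ (d / p) - 1) = ∏ e ∈ d.properDivisors, cyclotomic e ℚ := by
    intro p hp
    apply mul_left_cancel₀ hΦne
    rw [← mul_assoc, ← hMf p hp, Npoly_mul d p (Nat.dvd_of_mem_primeFactors hp), hprodX]
  have hsf : Squarefree ((X : ℚ[X]) ^ d - 1) := by
    have hsep : ((X : ℚ[X]) ^ d - C 1).Separable :=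
      Polynomial.separable_X_pow_sub_C 1 (by exact_mod_cast hd0.ne') one_ne_zero
    simpa using hsep.squarefree
  obtain ⟨p0, hp0⟩ := Nat.nonempty_primeFactors.mpr (by omega : 1 < d)
  have htop : Ideal.span ((d.primeFactors.image Mf : Finset ℚ[X]) : Set ℚ[X]) = ⊤ := by
    by_contra h
    obtain ⟨m, hm, hIm⟩ := Ideal.exists_le_maximal _ h
    obtain ⟨g, hgspan⟩ := Submodule.IsPrincipal.principal m
    have hdiv : ∀ p ∈ d.primeFactors, g ∣ Mf p := by
      intro p hp
      have hmem : Mf p ∈ m := hIm (Ideal.subset_span (by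
        simp only [Finset.coe_image, Set.mem_image, Finset.mem_coe]
        exact ⟨p, hp, rfl⟩))
      rw [hgspan] at hmem
      exact Ideal.mem_span_singleton.mp hmem
    have hg0 : g ≠ 0 := by
      rintro rfl
      have hzero : Mf p0 = 0 := zero_dvd_iff.mp (hdiv p0 hp0)
      have h2 := hMprod p0 hp0
      rw [hzero, zero_mul] at h2
      exact hXd (by rw [hprodX, ← h2, mul_zero])
    have hgprime : Prime g := by
      have hpr := hm.isPrime
      rw [hgspan] at hpr
      exact (Ideal.span_singleton_prime hg0).mp hpr
    have hgMp0 : g ∣ ∏ e ∈ d.properDivisors, cyclotomic e ℚ :=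
      (hdiv p0 hp0).trans ⟨X ^ (d / p0) - 1, (hMprod p0 hp0).symm⟩
    obtain ⟨e0, he0, hge0⟩ := hgprime.exists_mem_finset_dvd hgMp0
    have he0d : e0 ∣ d := (Nat.mem_properDivisors.mp he0).1
    have he0lt : e0 < d := (Nat.mem_properDivisors.mp he0).2
    obtain ⟨c, hc⟩ := he0d
    have he0pos : 0 < e0 := Nat.pos_of_mem_properDivisors he0
    have hc1 : c ≠ 1 := by rintro rfl; omega
    have hc0 : c ≠ 0 := by rintro rfl; omega
    set p := c.minFac with hpdef
    have hp : p.Prime := Nat.minFac_prime hc1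
    have hpc : p ∣ c := Nat.minFac_dvd c
    have hpd : p ∣ d := hc ▸ hpc.mul_left e0
    have hppf : p ∈ d.primeFactors := Nat.mem_primeFactors.mpr ⟨hp, hpd, hd0.ne'⟩
    have he0dp : e0 * p ∣ d := hc ▸ mul_dvd_mul_left e0 hpc
    obtain ⟨k, hk⟩ : e0 ∣ d / p := (Nat.dvd_div_iff_mul_dvd hpd).mpr (by
      rw [mul_comm]; exact he0dp)
    have hgX : g ∣ (X : ℚ[X]) ^ (d / p) - 1 := by
      refine hge0.trans ((cyclotomic.dvd_X_pow_sub_one e0 ℚ).trans ?_)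
      have hdd := sub_dvd_pow_sub_pow ((X : ℚ[X]) ^ e0) 1 k
      simpa [← pow_mul, ← hk] using hdd
    have hsq : g * g ∣ (X : ℚ[X]) ^ d - 1 := by
      refine (mul_dvd_mul (hdiv p hppf) hgX).trans ?_
      rw [hMprod p hppf, hprodX]
      exact dvd_mul_left _ _
    exact hgprime.not_unit (hsf g hsq)
  have h1 : (1 : ℚ[X]) ∈ Ideal.span ((d.primeFactors.image Mf : Finset ℚ[X]) : Set ℚ[X]) := htop ▸ Submodule.mem_top
  have h2 := Submodule.mem_map_of_mem
    (f := LinearMap.mulLeft ℚ[X] (cyclotomic d ℚ)) h1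
  rw [show (Ideal.span ((d.primeFactors.image Mf : Finset ℚ[X]) : Set ℚ[X]))
      = Submodule.span ℚ[X] ((d.primeFactors.image Mf : Finset ℚ[X]) : Set ℚ[X]) from rfl,
    Submodule.map_span] at h2
  have himg : (⇑(LinearMap.mulLeft ℚ[X] (cyclotomic d ℚ))) '' ((d.primeFactors.image Mf : Finset ℚ[X]) : Set ℚ[X])
      ⊆ ((d.primeFactors.image (Npoly d) : Finset ℚ[X]) : Set ℚ[X]) := by
    rintro x ⟨y, hy, rfl⟩
    simp only [Finset.coe_image, Set.mem_image, Finset.mem_coe] at hy ⊢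
    obtain ⟨p, hp, rfl⟩ := hy
    exact ⟨p, hp, ((LinearMap.mulLeft_apply ℚ[X] _ _).trans (hMf p hp).symm).symm⟩
  have h3 := Ideal.span_mono himg h2
  simpa using h3

lemma psiHom_apply_P (d : ℕ) [NeZero d] (μ : ZMod d → ℚ) (a : ZMod d) :
    (psiHom d (∑ i : ZMod d, monomial i.val (μ i))).coeff a = μ a := by
  rw [map_sum]
  simp only [psiHom_monomial]
  rw [AddMonoidAlgebra.coeff_sum, Finsupp.finset_sum_apply]
  simp only [AddMonoidAlgebra.coeff_single, Finsupp.single_apply, ZMod.natCast_val, ZMod.cast_id]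
  rw [Finset.sum_ite_eq' Finset.univ a μ]
  simp

theorem stmt1 (d : ℕ) (hd : 0 < d) [NeZero d] (ζ : ℂ) (hζ : IsPrimitiveRoot ζ d)
    (μ : ZMod d → ℚ)
    (hμ : ∑ i : ZMod d, (μ i : ℂ) * ζ ^ (i.val) = 0) :
    μ ∈ ⨆ p ∈ {p : ℕ | p.Prime ∧ p ∣ d}, periodicSub d p := by
  by_cases hd1 : d = 1
  · subst hd1
    have h0 : (μ 0 : ℂ) = 0 := by
      have he : ∑ i : ZMod 1, (μ i : ℂ) * ζ ^ i.val = (μ 0 : ℂ) := by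
        rw [Fintype.sum_subsingleton _ 0]; simp
      rw [he] at hμ
      exact hμ
    have hμ0 : μ = 0 := by
      funext a
      rw [Subsingleton.elim a 0]
      exact_mod_cast h0
    rw [hμ0]
    exact Submodule.zero_mem _
  · have hd2 : 2 ≤ d := by omega
    set P : ℚ[X] := ∑ i : ZMod d, monomial i.val (μ i) with hP
    have haev : aeval ζ P = 0 := by
      rw [hP, map_sum]
      simp only [aeval_monomial]
      simpa [eq_ratCast] using hμ
    have hdvdP : cyclotomic d ℚ ∣ P :=
      (cyclotomic_eq_minpoly_rat hζ hd) ▸ minpoly.dvd ℚ ζ haev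
    obtain ⟨Q, hQ⟩ := hdvdP
    have hPmem : P ∈ Ideal.span
        ((d.primeFactors.image (Npoly d) : Finset ℚ[X]) : Set ℚ[X]) := by
      rw [hQ]
      exact Ideal.mul_mem_right Q _ (cyclotomic_mem_span d hd2)
    obtain ⟨f, -, hf⟩ := Submodule.mem_span_finset.mp hPmem
    have hμsum : μ = ∑ n ∈ d.primeFactors.image (Npoly d),
        (⇑(psiHom d (f n * n)).coeff : ZMod d → ℚ) := by
      funext a
      rw [Finset.sum_apply]
      have h1 : μ a = (psiHom d P).coeff a := (psiHom_apply_P d μ a).symm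
      rw [h1, ← hf, map_sum]
      rw [AddMonoidAlgebra.coeff_sum, Finsupp.finset_sum_apply]
      simp only [smul_eq_mul]
    rw [hμsum]
    apply Submodule.sum_mem
    intro n hn
    obtain ⟨p, hp, rfl⟩ := Finset.mem_image.mp hn
    have hpd : p ∣ d := Nat.dvd_of_mem_primeFactors hp
    refine Submodule.mem_iSup_of_mem p (Submodule.mem_iSup_of_mem
      (⟨Nat.prime_of_mem_primeFactors hp, hpd⟩ : p ∈ {p : ℕ | p.Prime ∧ p ∣ d}) ?_)
    have hmem : ∀ a : ZMod d,
        (psiHom d (f (Npoly d p) * Npoly d p)).coeff (a + ((d / p : ℕ) : ZMod d))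
          = (psiHom d (f (Npoly d p) * Npoly d p)).coeff a := by
      intro a
      rw [mul_comm]
      exact psi_periodic d p hpd (f (Npoly d p)) a
    exact hmem
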